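/- Assume there exists c ∈ ℕ^r with Ḡ(c) ⊆ O (a conductor). Then for every ℓ ∈ ℕ^r there exists a unique maximal ℓ* ∈ ℕ^r with F(ℓ*) = F(ℓ); that is, there exists ℓ* with F(ℓ*) = F(ℓ) such that every ℓ' ∈ ℕ^r with F(ℓ') = F(ℓ) satisfies ℓ' ≤ ℓ*. In particular F(ℓ') = F(ℓ) for every ℓ ≤ ℓ' ≤ ℓ*. -/

import Mathlib

/-- `Gbar r ℓ` is the subspace of `r`-tuples of power series whose `i`-th component has
order at least `ℓ i`, for every `i`. -/
noncomputable def Gbar (r : ℕ) (ℓ : Fin r → ℕ) : Submodule ℂ (Fin r → PowerSeries ℂ) where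
  carrier := {f | ∀ i : Fin r, (ℓ i : ℕ∞) ≤ (f i).order}
  zero_mem' := by
    intro i
    simp [PowerSeries.order_zero]
  add_mem' := by
    intro a b ha hb i
    refine le_trans (le_min (ha i) (hb i)) ?_
    simpa using PowerSeries.min_order_le_order_add (a i) (b i)
  smul_mem' := by
    intro c f hf i
    refine PowerSeries.le_order _ _ ?_
    intro n hn
    have hlt : (n : ℕ∞) < ((f : Fin r → PowerSeries ℂ) i).order := lt_of_lt_of_le hn (hf i)
    have : (PowerSeries.coeff (R := ℂ) n) ((c • f) i) = c • (PowerSeries.coeff (R := ℂ) n) (f i) := by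
      simp
    rw [this, PowerSeries.coeff_of_lt_order n hlt, smul_zero]

/-- `F O ℓ = O ∩ Ḡ(ℓ)`, the valuation filtration of the subspace `O`. -/
noncomputable def Ffil (r : ℕ) (O : Submodule ℂ (Fin r → PowerSeries ℂ)) (ℓ : Fin r → ℕ) :
    Submodule ℂ (Fin r → PowerSeries ℂ) :=
  O ⊓ Gbar r ℓ

/-- `hfun O ℓ = dim_ℂ O / (O ∩ Ḡ(ℓ))`, the Hilbert function of the filtration. -/
noncomputable def hfun (r : ℕ) (O : Submodule ℂ (Fin r → PowerSeries ℂ)) (ℓ : Fin r → ℕ) : ℕ :=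
  Module.finrank ℂ (O ⧸ (Gbar r ℓ).comap O.subtype)

/-- `hbarfun O ℓ = dim_ℂ V / (Ḡ(ℓ) + O)`. -/
noncomputable def hbarfun (r : ℕ) (O : Submodule ℂ (Fin r → PowerSeries ℂ)) (ℓ : Fin r → ℕ) : ℕ :=
  Module.finrank ℂ ((Fin r → PowerSeries ℂ) ⧸ (Gbar r ℓ ⊔ O))

/-- `eN i` is the `i`-th standard basis vector of `ℕ^r`. -/
def eN {r : ℕ} (i : Fin r) : Fin r → ℕ := fun j => if j = i then 1 else 0

lemma Gbar_antitone (r : ℕ) {ℓ₁ ℓ₂ : Fin r → ℕ} (h : ℓ₁ ≤ ℓ₂) :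
    Gbar r ℓ₂ ≤ Gbar r ℓ₁ := by
  intro f hf i
  exact le_trans (by exact_mod_cast h i) (hf i)

lemma monomial_mem_Gbar (r : ℕ) (ℓ : Fin r → ℕ) (i : Fin r) (m : ℕ) (hm : ℓ i ≤ m) :
    Pi.single i ((PowerSeries.X : PowerSeries ℂ) ^ m) ∈ Gbar r ℓ := by
  intro j
  by_cases hj : j = i
  · subst hj
    simp [PowerSeries.order_X_pow]
    exact_mod_cast hm
  · simp [Pi.single_apply, hj, PowerSeries.order_zero]

/-- assuming a conductor `c` with `Ḡ(c) ⊆ O`, every `ℓ ∈ ℕ^r` admits a unique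
maximal `ℓ*` with `F(ℓ*) = F(ℓ)`; in particular `F(ℓ') = F(ℓ)` for all `ℓ ≤ ℓ' ≤ ℓ*`. -/
theorem statement12 (r : ℕ) (hr : 1 ≤ r) (O : Submodule ℂ (Fin r → PowerSeries ℂ))
    (c : Fin r → ℕ) (hcond : Gbar r c ≤ O) (ℓ : Fin r → ℕ) :
    ∃ ℓstar : Fin r → ℕ,
      Ffil r O ℓstar = Ffil r O ℓ ∧
      (∀ ℓ' : Fin r → ℕ, Ffil r O ℓ' = Ffil r O ℓ → ℓ' ≤ ℓstar) ∧
      (∀ ℓ' : Fin r → ℕ, ℓ ≤ ℓ' → ℓ' ≤ ℓstar → Ffil r O ℓ' = Ffil r O ℓ) := by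
  classical
  set S : Set (Fin r → ℕ) := {ℓ' | Ffil r O ℓ' = Ffil r O ℓ} with hS
  have hmemS : ℓ ∈ S := rfl
  -- boundedness of S
  have hbound : ∀ ℓ' ∈ S, ∀ i, ℓ' i ≤ max (c i) (ℓ i) := by
    intro ℓ' hℓ' i
    set m := max (c i) (ℓ i)
    have hf1 : Pi.single i ((PowerSeries.X : PowerSeries ℂ) ^ m) ∈ Ffil r O ℓ := by
      refine Submodule.mem_inf.2 ⟨hcond ?_, ?_⟩
      · exact monomial_mem_Gbar r c i m (le_max_left _ _)
      · exact monomial_mem_Gbar r ℓ i m (le_max_right _ _)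
    have hf2 : Pi.single i ((PowerSeries.X : PowerSeries ℂ) ^ m) ∈ Gbar r ℓ' := by
      have := hℓ'.symm ▸ hf1
      exact (Submodule.mem_inf.1 this).2
    have := hf2 i
    rw [Pi.single_eq_same, PowerSeries.order_X_pow] at this
    exact_mod_cast this
  set ℓstar : Fin r → ℕ := fun i => sSup ((fun ℓ' => ℓ' i) '' S) with hℓstar
  have hbdd : ∀ i, BddAbove ((fun ℓ' => ℓ' i) '' S) := by
    intro i
    exact ⟨max (c i) (ℓ i), by rintro x ⟨ℓ', hℓ', rfl⟩; exact hbound ℓ' hℓ' i⟩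
  have hne : ∀ i, ((fun ℓ' => ℓ' i) '' S).Nonempty := fun i => ⟨ℓ i, ℓ, hmemS, rfl⟩
  have hmax : ∀ ℓ' ∈ S, ℓ' ≤ ℓstar := by
    intro ℓ' hℓ' i
    exact le_csSup (hbdd i) ⟨ℓ', hℓ', rfl⟩
  have hstar : Ffil r O ℓstar = Ffil r O ℓ := by
    apply le_antisymm
    · exact inf_le_inf_left O (Gbar_antitone r (hmax ℓ hmemS))
    · intro f hf
      refine Submodule.mem_inf.2 ⟨(Submodule.mem_inf.1 hf).1, ?_⟩
      intro i
      obtain ⟨ℓ', hℓ', hval⟩ := Nat.sSup_mem (hne i) (hbdd i)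
      have hf' : f ∈ Ffil r O ℓ' := hℓ' ▸ hf
      have h3 := (Submodule.mem_inf.1 hf').2 i
      have h4 : ℓstar i = ℓ' i := hval.symm
      rw [h4]
      exact h3
  refine ⟨ℓstar, hstar, fun ℓ' h => hmax ℓ' h, fun ℓ' h1 h2 => le_antisymm ?_ ?_⟩
  · exact inf_le_inf_left O (Gbar_antitone r h1)
  · calc Ffil r O ℓ = Ffil r O ℓstar := hstar.symm
      _ ≤ Ffil r O ℓ' := inf_le_inf_left O (Gbar_antitone r h2)
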